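/- Let ω : ℝ → ℝ be continuous with |ω(t)| ≤ K(1 + t²) for all t ∈ ℝ and some K > 0, and suppose ω has sub-linear growth at +∞, i.e. ω(t)/t → 0 as t → +∞. Then (1/t) ∫_{−∞}^t e^{s−t} ω(s) ds → 0 as t → +∞. -/

import Mathlib

open MeasureTheory Real Filter

lemma aux_hF (x : ℝ) : HasDerivAt (fun x => Real.exp x * (x ^ 2 - 2 * x + 3))
    (Real.exp x * (1 + x ^ 2)) x := by
  have := ((Real.hasDerivAt_exp x).mul (((hasDerivAt_pow 2 x).sub
    ((hasDerivAt_id x).const_mul 2)).add_const 3))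
  refine this.congr_deriv ?_
  simp only [id_eq, Pi.sub_apply]
  ring

lemma aux_int (c : ℝ) : IntegrableOn (fun s => Real.exp s * (1 + s ^ 2)) (Set.Iic c) := by
  have hcont : Continuous fun s : ℝ => Real.exp s * (1 + s ^ 2) := by continuity
  apply integrableOn_Iic_of_intervalIntegral_norm_bounded
      (Real.exp c * (c ^ 2 - 2 * c + 3)) c
      (fun i : ℝ => hcont.integrableOn_Ioc) tendsto_id
  filter_upwards [eventually_le_atBot c] with a hac
  have h1 : ∀ x : ℝ, ‖Real.exp x * (1 + x ^ 2)‖ = Real.exp x * (1 + x ^ 2) := by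
    intro x
    rw [Real.norm_eq_abs, abs_of_nonneg]
    positivity
  simp_rw [h1, id_eq]
  rw [intervalIntegral.integral_eq_sub_of_hasDerivAt (fun x _ => aux_hF x)
    (hcont.intervalIntegrable a c)]
  have : 0 ≤ Real.exp a * (a ^ 2 - 2 * a + 3) := by nlinarith [Real.exp_pos a, sq_nonneg (a-1)]
  linarith

/-- If `ω` has at most quadratic growth and sub-linear growth at `+∞`, then the
time average of the convolution `∫_{−∞}^t e^{s−t} ω(s) ds` tends to zero. -/
theorem stmt_3 (ω : ℝ → ℝ) (hω : Continuous ω) (K : ℝ) (hK : 0 < K)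
    (hbd : ∀ t : ℝ, |ω t| ≤ K * (1 + t ^ 2))
    (hsub : Tendsto (fun t : ℝ => ω t / t) atTop (nhds 0)) :
    Tendsto (fun t : ℝ => (1 / t) * ∫ s in Set.Iic t, Real.exp (s - t) * ω s)
      atTop (nhds 0) := by
  have hcontst : ∀ t : ℝ, Continuous fun s => Real.exp (s - t) * ω s := fun t =>
    (Real.continuous_exp.comp (continuous_id.sub continuous_const)).mul hω
  have hptw : ∀ t s : ℝ, |Real.exp (s - t) * ω s|
      ≤ (Real.exp (-t) * K) * (Real.exp s * (1 + s ^ 2)) := by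
    intro t s
    rw [abs_mul, abs_of_pos (Real.exp_pos _)]
    calc Real.exp (s - t) * |ω s| ≤ Real.exp (s - t) * (K * (1 + s ^ 2)) :=
          mul_le_mul_of_nonneg_left (hbd s) (Real.exp_pos _).le
      _ = (Real.exp (-t) * K) * (Real.exp s * (1 + s ^ 2)) := by
          rw [Real.exp_sub, Real.exp_neg]; ring
  have hInt : ∀ t c : ℝ, IntegrableOn (fun s => Real.exp (s - t) * ω s) (Set.Iic c) := by
    intro t c
    apply Integrable.mono' ((aux_int c).const_mul (Real.exp (-t) * K))
      (hcontst t).aestronglyMeasurable.restrict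
    filter_upwards with s
    rw [Real.norm_eq_abs]
    exact hptw t s
  have hexp_int : ∀ t : ℝ, IntegrableOn (fun s => Real.exp (s - t)) (Set.Iic t) := by
    intro t
    have he : (fun s : ℝ => Real.exp (s - t)) = fun s => Real.exp s * Real.exp (-t) := by
      funext s; rw [← Real.exp_add]; ring_nf
    rw [he]
    exact (integrableOn_exp_Iic t).mul_const _
  have hexp_val : ∀ t : ℝ, (∫ s in Set.Iic t, Real.exp (s - t)) = 1 := by
    intro t
    simp_rw [Real.exp_sub]
    rw [integral_div, integral_exp_Iic, div_self (Real.exp_ne_zero t)]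
  rw [Metric.tendsto_atTop]
  intro ε hε
  have h4 : (0:ℝ) < ε / 4 := by linarith
  obtain ⟨M0, hM0⟩ := Metric.tendsto_atTop.mp hsub (ε / 4) h4
  set M : ℝ := max M0 1 with hMdef
  have hM1 : (1:ℝ) ≤ M := le_max_right _ _
  have hωM : ∀ s, M ≤ s → |ω s| ≤ ε / 4 * s := by
    intro s hs
    have hs0 : (0:ℝ) < s := lt_of_lt_of_le one_pos (hM1.trans hs)
    have h1 := hM0 s ((le_max_left _ _).trans hs)
    rw [Real.dist_0_eq_abs, abs_div, abs_of_pos hs0] at h1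
    rw [div_lt_iff₀ hs0] at h1
    linarith
  set C : ℝ := ∫ s in Set.Iic M, Real.exp s * (1 + s ^ 2) with hCdef
  have hDtend : Tendsto (fun t : ℝ => Real.exp (-t) * K * C) atTop (nhds 0) := by
    have := (Real.tendsto_exp_neg_atTop_nhds_zero).mul_const (K * C)
    simpa [mul_assoc] using this
  obtain ⟨N0, hN0⟩ := Metric.tendsto_atTop.mp hDtend (ε / 4) h4
  refine ⟨max M N0, fun t ht => ?_⟩
  have hMt : M ≤ t := (le_max_left _ _).trans ht
  have ht1 : (1:ℝ) ≤ t := hM1.trans hMt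
  have ht0 : (0:ℝ) < t := lt_of_lt_of_le one_pos ht1
  have hN0t := hN0 t ((le_max_right _ _).trans ht)
  rw [Real.dist_0_eq_abs] at hN0t
  have hDle : Real.exp (-t) * K * C ≤ ε / 4 := (le_abs_self _).trans hN0t.le
  -- split the integral
  have hsplit : (∫ s in Set.Iic t, Real.exp (s - t) * ω s)
      = (∫ s in Set.Iic M, Real.exp (s - t) * ω s)
        + ∫ s in Set.Ioc M t, Real.exp (s - t) * ω s := by
    rw [← setIntegral_union (Set.Iic_disjoint_Ioc le_rfl) measurableSet_Ioc
      (hInt t M) ((hInt t t).mono_set Set.Ioc_subset_Iic_self),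
      Set.Iic_union_Ioc_eq_Iic hMt]
  have hA : |∫ s in Set.Iic M, Real.exp (s - t) * ω s| ≤ ε / 4 := by
    calc |∫ s in Set.Iic M, Real.exp (s - t) * ω s|
        ≤ ∫ s in Set.Iic M, |Real.exp (s - t) * ω s| :=
          norm_integral_le_integral_norm (μ := volume.restrict (Set.Iic M))
            (fun s => Real.exp (s - t) * ω s)
      _ ≤ ∫ s in Set.Iic M, (Real.exp (-t) * K) * (Real.exp s * (1 + s ^ 2)) := by
          exact integral_mono (hInt t M).abs ((aux_int M).const_mul _) (fun s => hptw t s)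
      _ = Real.exp (-t) * K * C := by rw [integral_const_mul]
      _ ≤ ε / 4 := hDle
  have hB : |∫ s in Set.Ioc M t, Real.exp (s - t) * ω s| ≤ ε / 4 * t := by
    have hc0 : 0 ≤ ε / 4 * t := by positivity
    calc |∫ s in Set.Ioc M t, Real.exp (s - t) * ω s|
        ≤ ∫ s in Set.Ioc M t, |Real.exp (s - t) * ω s| :=
          norm_integral_le_integral_norm (μ := volume.restrict (Set.Ioc M t))
            (fun s => Real.exp (s - t) * ω s)
      _ ≤ ∫ s in Set.Ioc M t, Real.exp (s - t) * (ε / 4 * t) := by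
          apply setIntegral_mono_on ((hInt t t).mono_set Set.Ioc_subset_Iic_self).abs
            ((by continuity : Continuous fun s : ℝ => Real.exp (s - t) * (ε / 4 * t)).integrableOn_Ioc) measurableSet_Ioc
          intro s hs
          rw [abs_mul, abs_of_pos (Real.exp_pos _)]
          have h1 : |ω s| ≤ ε / 4 * s := hωM s hs.1.le
          have h3 : |ω s| ≤ ε / 4 * t :=
            h1.trans (mul_le_mul_of_nonneg_left hs.2 h4.le)
          exact mul_le_mul_of_nonneg_left h3 (Real.exp_pos _).le
      _ ≤ ∫ s in Set.Iic t, Real.exp (s - t) * (ε / 4 * t) := by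
          apply setIntegral_mono_set ((hexp_int t).mul_const _)
          · filter_upwards with s
            positivity
          · exact HasSubset.Subset.eventuallyLE Set.Ioc_subset_Iic_self
      _ = ε / 4 * t := by rw [integral_mul_const, hexp_val t, one_mul]
  rw [Real.dist_0_eq_abs, hsplit, abs_mul, abs_of_pos (by positivity : (0:ℝ) < 1 / t)]
  have habs : |(∫ s in Set.Iic M, Real.exp (s - t) * ω s)
      + ∫ s in Set.Ioc M t, Real.exp (s - t) * ω s| ≤ ε / 2 * t := by
    calc |(∫ s in Set.Iic M, Real.exp (s - t) * ω s)
        + ∫ s in Set.Ioc M t, Real.exp (s - t) * ω s|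
        ≤ |∫ s in Set.Iic M, Real.exp (s - t) * ω s|
          + |∫ s in Set.Ioc M t, Real.exp (s - t) * ω s| := abs_add_le _ _
      _ ≤ ε / 4 + ε / 4 * t := add_le_add hA hB
      _ ≤ ε / 2 * t := by nlinarith
  calc 1 / t * |(∫ s in Set.Iic M, Real.exp (s - t) * ω s)
      + ∫ s in Set.Ioc M t, Real.exp (s - t) * ω s|
      ≤ 1 / t * (ε / 2 * t) := mul_le_mul_of_nonneg_left habs (by positivity)
    _ = ε / 2 := by field_simp
    _ < ε := by linarith
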